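/- arXiv:1701.03042 — 2 statements merged into one kernel-verified Lean document; each statement's English description precedes it below -/
import Mathlib

section
/- The second-order Krylov subspace G_m(A,B;u) = span{r_0, …, r_{m-1}} equals the projection onto the first n coordinates of the standard Krylov subspace K_m(H, ν) = span{ν, Hν, …, H^{m-1}ν}. -/
open Matrix

/-- The second-order Krylov subspace G_m(A,B;u) = span{r_0,…,r_{m-1}} equals the projection
onto the first n coordinates of the standard Krylov subspace K_m(H,ν), where
H = [[A,B],[I,0]] and ν = [u;0]. -/
theorem stmt1 (n m : ℕ) (A B : Matrix (Fin n) (Fin n) ℂ) (u : Fin n → ℂ) (hu : u ≠ 0)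
    (r : ℕ → Fin n → ℂ)
    (hr0 : r 0 = u) (hr1 : r 1 = A.mulVec u)
    (hr : ∀ j, 2 ≤ j → r j = A.mulVec (r (j - 1)) + B.mulVec (r (j - 2))) :
    Submodule.span ℂ (Set.range fun i : Fin m => r i)
      = Submodule.map (LinearMap.funLeft ℂ ℂ (Sum.inl : Fin n → Fin n ⊕ Fin n))
          (Submodule.span ℂ (Set.range fun i : Fin m =>
            ((fromBlocks A B 1 0 : Matrix (Fin n ⊕ Fin n) (Fin n ⊕ Fin n) ℂ) ^ (i : ℕ)).mulVec
              (Sum.elim u 0))) := by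
  have key : ∀ j : ℕ,
      ((fromBlocks A B 1 0 : Matrix (Fin n ⊕ Fin n) (Fin n ⊕ Fin n) ℂ) ^ j).mulVec
        (Sum.elim u 0) = Sum.elim (r j) (if j = 0 then 0 else r (j - 1)) := by
    intro j
    induction j with
    | zero => simp [hr0]
    | succ k ih =>
      rw [pow_succ', ← Matrix.mulVec_mulVec, ih, fromBlocks_mulVec]
      have h1 : (Sum.elim (r k) (if k = 0 then 0 else r (k - 1)) ∘ Sum.inl) = r k := rfl
      have h2 : (Sum.elim (r k) (if k = 0 then 0 else r (k - 1)) ∘ Sum.inr)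
          = (if k = 0 then 0 else r (k - 1)) := rfl
      rw [h1, h2, Matrix.one_mulVec, Matrix.zero_mulVec, add_zero]
      have hk : A.mulVec (r k) + B.mulVec (if k = 0 then 0 else r (k - 1)) = r (k + 1) := by
        rcases Nat.eq_zero_or_pos k with hk0 | hk1
        · subst hk0; simp [hr0, hr1, Matrix.mulVec_zero]
        · rw [if_neg hk1.ne', hr (k + 1) (by omega)]
          simp
      rw [hk]
      simp
  rw [Submodule.map_span, ← Set.range_comp]
  congr 1
  funext i
  simp only [Function.comp_apply, key, LinearMap.funLeft_apply]
  rfl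
end

section
/- After applying p implicit shifted QR steps to an m-step decomposition, the vector b_m^T = e_m^T V_m has at most p+1 nonzero entries, all located in the last p+1 positions; equivalently, the first m−p−1 entries of e_m^T V_m are zero. -/
open Matrix

private def Band {m : ℕ} (A : Matrix (Fin m) (Fin m) ℂ) (a : ℕ) : Prop :=
  ∀ i j : Fin m, (j : ℕ) + a < i → A i j = 0

private lemma band_mul {m : ℕ} {A B : Matrix (Fin m) (Fin m) ℂ} {a b : ℕ}
    (hA : Band A a) (hB : Band B b) : Band (A * B) (a + b) := by
  intro i j hij
  rw [Matrix.mul_apply]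
  apply Finset.sum_eq_zero
  intro k _
  by_cases hk : (k : ℕ) + a < i
  · rw [hA i k hk, zero_mul]
  · rw [hB k j (by omega), mul_zero]

private lemma band_prod {m : ℕ} (L : List (Matrix (Fin m) (Fin m) ℂ))
    (h : ∀ A ∈ L, Band A 1) : Band L.prod L.length := by
  induction L with
  | nil =>
    intro i j hij
    simp only [List.prod_nil, List.length_nil] at *
    exact Matrix.one_apply_ne (by intro he; omega)
  | cons A L ih =>
    simp only [List.prod_cons, List.length_cons]
    have := band_mul (h A (by simp)) (ih (fun B hB => h B (by simp [hB])))
    intro i j hij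
    exact this i j (by omega)

/-- After p implicit shifted QR steps on an unreduced upper Hessenberg T (p < m), the row
vector e_mᵀ V has its first m−p−1 entries equal to zero, where V is the unitary QR factor of
(T−μ₁I)⋯(T−μ_pI). -/
theorem stmt4 (m p : ℕ) (hp : p < m) (T : Matrix (Fin m) (Fin m) ℂ)
    (hHess : ∀ i j : Fin m, (j : ℕ) + 1 < i → T i j = 0)
    (hunred : ∀ i j : Fin m, (i : ℕ) = (j : ℕ) + 1 → T i j ≠ 0)
    (μ : Fin p → ℂ) (V R : Matrix (Fin m) (Fin m) ℂ)
    (hV : V ∈ Matrix.unitaryGroup (Fin m) ℂ)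
    (hR : ∀ i j : Fin m, (j : ℕ) < i → R i j = 0) (hRinv : IsUnit R)
    (hQR : (List.ofFn fun i : Fin p => T - μ i • 1).prod = V * R) :
    ∀ j : Fin m, (j : ℕ) < m - p - 1 → V ⟨m - 1, by omega⟩ j = 0 := by
  set M := (List.ofFn fun i : Fin p => T - μ i • 1).prod with hM
  have hband : Band M p := by
    have := band_prod (List.ofFn fun i : Fin p => T - μ i • 1) ?_
    · simpa using this
    · intro A hA
      rw [List.mem_ofFn] at hA
      obtain ⟨i, rfl⟩ := hA
      intro a b hab
      simp only [Matrix.sub_apply, Matrix.smul_apply, Matrix.one_apply]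
      rw [hHess a b hab, if_neg (by intro he; omega)]
      simp
  haveI : Invertible R := Matrix.invertibleOfIsUnitDet R
    ((Matrix.isUnit_iff_isUnit_det R).mp hRinv)
  have hRtri : BlockTriangular R (id : Fin m → Fin m) := fun i j h => hR i j h
  have hRitri : BlockTriangular R⁻¹ (id : Fin m → Fin m) :=
    Matrix.blockTriangular_inv_of_blockTriangular hRtri
  have hVeq : V = M * R⁻¹ := by
    rw [hQR, Matrix.mul_assoc, Matrix.mul_nonsing_inv R
      ((Matrix.isUnit_iff_isUnit_det R).mp hRinv), Matrix.mul_one]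
  intro j hj
  rw [hVeq, Matrix.mul_apply]
  apply Finset.sum_eq_zero
  intro k _
  by_cases hk : (k : ℕ) ≤ j
  · rw [hband ⟨m - 1, by omega⟩ k (by simp only [Fin.val_mk]; omega), zero_mul]
  · rw [hRitri (show (id j : Fin m) < id k from Fin.lt_def.mpr (by simp only [id_eq]; omega)), mul_zero]
end
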